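/- Let m be a squarefree integer that is not a square, and suppose n is a nonzero rational number such that the quadratic Hilbert symbol (n, m)_v = +1 for every place v of ℚ (including the infinite place). Then n is the norm of an element of ℚ(√m), i.e., there exist rational x, y with n = x² − m y². -/

import Mathlib

section NormGroup

variable {F : Type*} [Field F]

/-- `a` is a norm of the extension `F(√m)/F` (degenerately, of the form `x² - m y²`). -/
def IsN (m a : F) : Prop := ∃ x y : F, a = x ^ 2 - m * y ^ 2

theorem IsN.mul {m a b : F} (ha : IsN m a) (hb : IsN m b) : IsN m (a * b) := by
  obtain ⟨x1, y1, rfl⟩ := ha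
  obtain ⟨x2, y2, rfl⟩ := hb
  exact ⟨x1 * x2 + m * y1 * y2, x1 * y2 + x2 * y1, by ring⟩

theorem isN_sq (m c : F) : IsN m (c ^ 2) := ⟨c, 0, by ring⟩

theorem IsN.inv {m a : F} (h : IsN m a) : IsN m a⁻¹ := by
  rcases eq_or_ne a 0 with rfl | ha
  · simpa using h
  · have := h.mul (isN_sq m a⁻¹)
    rwa [show a * (a⁻¹) ^ 2 = a⁻¹ by field_simp] at this

theorem IsN.of_mul_left {m a b : F} (ha : a ≠ 0) (h1 : IsN m a) (h2 : IsN m (a * b)) :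
    IsN m b := by
  have := h1.inv.mul h2
  rwa [show a⁻¹ * (a * b) = b by field_simp] at this

theorem IsN.of_mul_sq {m a : F} {c : F} (hc : c ≠ 0) (h : IsN m (a * c ^ 2)) : IsN m a := by
  have := h.mul (isN_sq m c⁻¹)
  rwa [show a * c ^ 2 * (c⁻¹) ^ 2 = a by field_simp] at this

theorem IsN.swap {m n : F} (h2 : (2 : F) ≠ 0) (hn : n ≠ 0) (h : IsN m n) : IsN n m := by
  obtain ⟨x, y, rfl⟩ := h
  by_cases hy : y = 0
  · subst hy
    have hx : x ≠ 0 := by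
      intro h; apply hn; rw [h]; ring
    refine ⟨(m + 1) / 2, (m - 1) / (2 * x), ?_⟩
    field_simp
    ring
  · exact ⟨x / y, 1 / y, by field_simp; ring⟩

end NormGroup

theorem toZMod_eq_zero_iff {p : ℕ} [Fact p.Prime] (z : ℤ_[p]) :
    PadicInt.toZMod z = 0 ↔ (p : ℤ_[p]) ∣ z := by
  rw [← RingHom.mem_ker, PadicInt.ker_toZMod, PadicInt.maximalIdeal_eq_span_p,
    Ideal.mem_span_singleton]

/-- a scaling element making a triple `(x, y, 1)` into a primitive integral triple -/
theorem exists_scale {p : ℕ} [Fact p.Prime] (x y : ℚ_[p]) :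
    ∃ c : ℚ_[p], c ≠ 0 ∧ ‖x / c‖ ≤ 1 ∧ ‖y / c‖ ≤ 1 ∧ ‖1 / c‖ ≤ 1 ∧
      (‖x / c‖ = 1 ∨ ‖y / c‖ = 1 ∨ ‖1 / c‖ = 1) := by
  by_cases h : ‖x‖ ≤ 1 ∧ ‖y‖ ≤ 1
  · exact ⟨1, one_ne_zero, by simpa using h.1, by simpa using h.2, by simp, Or.inr (Or.inr (by simp))⟩
  · have hmax : 1 < max ‖x‖ ‖y‖ := by
      rcases not_and_or.mp h with h' | h' <;> [exact lt_max_of_lt_left (not_le.mp h');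
        exact lt_max_of_lt_right (not_le.mp h')]
    rcases le_total ‖x‖ ‖y‖ with hxy | hxy
    · have hy1 : 1 < ‖y‖ := by rwa [max_eq_right hxy] at hmax
      have hy0 : y ≠ 0 := by
        intro h; rw [h, norm_zero] at hy1; linarith
      refine ⟨y, hy0, ?_, ?_, ?_, Or.inr (Or.inl ?_)⟩
      · rw [norm_div]; exact div_le_one_of_le₀ hxy (norm_nonneg _)
      · rw [div_self hy0, norm_one]
      · rw [norm_div, norm_one]
        exact le_of_lt (by rw [div_lt_one (by linarith)]; linarith)
      · rw [div_self hy0, norm_one]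
    · have hx1 : 1 < ‖x‖ := by rwa [max_eq_left hxy] at hmax
      have hx0 : x ≠ 0 := by
        intro h; rw [h, norm_zero] at hx1; linarith
      refine ⟨x, hx0, ?_, ?_, ?_, Or.inl ?_⟩
      · rw [div_self hx0, norm_one]
      · rw [norm_div]; exact div_le_one_of_le₀ hxy (norm_nonneg _)
      · rw [norm_div, norm_one]
        exact le_of_lt (by rw [div_lt_one (by linarith)]; linarith)
      · rw [div_self hx0, norm_one]

/-- Local solvability at `p` with `p ∥ n` forces `m` to be a square mod `p`. -/
theorem local_sq (p : ℕ) [hp : Fact p.Prime] (m n₀ : ℤ) (hn₀ : ¬ (p : ℤ) ∣ n₀)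
    (h : ∃ x y : ℚ_[p], (((p : ℤ) * n₀ : ℤ) : ℚ_[p]) = x ^ 2 - (m : ℚ_[p]) * y ^ 2) :
    IsSquare ((m : ZMod p)) := by
  obtain ⟨x, y, hxy⟩ := h
  obtain ⟨c, hc0, hA, hB, hC, hdisj⟩ := exists_scale x y
  set A : ℤ_[p] := ⟨x / c, hA⟩ with hAdef
  set B : ℤ_[p] := ⟨y / c, hB⟩ with hBdef
  set C : ℤ_[p] := ⟨1 / c, hC⟩ with hCdef
  have hC0 : (C : ℚ_[p]) ≠ 0 := by
    simpa [hCdef] using one_div_ne_zero hc0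
  have key : A ^ 2 - (m : ℤ_[p]) * B ^ 2 = (p : ℤ_[p]) * (n₀ : ℤ_[p]) * C ^ 2 := by
    apply Subtype.coe_injective
    push_cast
    show (x / c) ^ 2 - (m : ℚ_[p]) * (y / c) ^ 2 = (p : ℚ_[p]) * (n₀ : ℚ_[p]) * (1 / c) ^ 2
    have : ((p : ℤ) * n₀ : ℤ) = ((p : ℚ_[p]) * n₀ : ℚ_[p]) := by push_cast; ring
    field_simp
    push_cast at hxy
    linear_combination -hxy
  set φ := (PadicInt.toZMod : ℤ_[p] →+* ZMod p)
  have keyz : φ A ^ 2 = (m : ZMod p) * φ B ^ 2 := by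
    have := congrArg φ key
    simp only [map_sub, map_mul, map_pow, map_intCast, map_natCast] at this
    rw [ZMod.natCast_self] at this
    simp at this
    linear_combination this
  by_cases hBz : φ B = 0
  · exfalso
    have hAz : φ A = 0 := by
      have : φ A ^ 2 = 0 := by rw [keyz, hBz]; ring
      exact pow_eq_zero_iff (n := 2) (by norm_num) |>.mp this
    obtain ⟨A', hA'⟩ := (toZMod_eq_zero_iff A).mp hAz
    obtain ⟨B', hB'⟩ := (toZMod_eq_zero_iff B).mp hBz
    have hp0 : (p : ℤ_[p]) ≠ 0 := Nat.cast_ne_zero.mpr hp.1.ne_zero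
    have key2 : (p : ℤ_[p]) * (A' ^ 2 - (m : ℤ_[p]) * B' ^ 2) = (n₀ : ℤ_[p]) * C ^ 2 := by
      apply mul_left_cancel₀ hp0
      rw [hA', hB'] at key
      linear_combination key
    have hCz : φ C = 0 := by
      have h1 : (n₀ : ZMod p) * φ C ^ 2 = 0 := by
        have := congrArg φ key2
        simp only [map_mul, map_sub, map_pow, map_intCast, map_natCast] at this
        rw [ZMod.natCast_self] at this
        rw [← this]; ring
      have hn₀z : (n₀ : ZMod p) ≠ 0 := by
        rw [Ne, ZMod.intCast_zmod_eq_zero_iff_dvd]; exact hn₀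
      have : φ C ^ 2 = 0 := by
        rcases mul_eq_zero.mp h1 with h | h
        · exact absurd h hn₀z
        · exact h
      exact pow_eq_zero_iff (n := 2) (by norm_num) |>.mp this
    obtain ⟨C', hC'⟩ := (toZMod_eq_zero_iff C).mp hCz
    have hnormA : ‖x / c‖ < 1 := by
      have := (PadicInt.norm_lt_one_iff_dvd A).mpr ⟨A', hA'⟩
      simpa [PadicInt.norm_def, hAdef] using this
    have hnormB : ‖y / c‖ < 1 := by
      have := (PadicInt.norm_lt_one_iff_dvd B).mpr ⟨B', hB'⟩
      simpa [PadicInt.norm_def, hBdef] using this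
    have hnormC : ‖1 / c‖ < 1 := by
      have := (PadicInt.norm_lt_one_iff_dvd C).mpr ⟨C', hC'⟩
      simpa [PadicInt.norm_def, hCdef] using this
    rcases hdisj with h | h | h <;> linarith [h]
  · have : (m : ZMod p) = (φ A / φ B) ^ 2 := by
      rw [div_pow, keyz]
      field_simp
    exact ⟨φ A / φ B, by rw [this]; ring⟩

theorem isSquare_zmod_of_forall_prime (m : ℤ) :
    ∀ N : ℕ, Squarefree N → (∀ p : ℕ, p.Prime → p ∣ N → IsSquare ((m : ZMod p))) →
      IsSquare ((m : ZMod N)) := by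
  intro N
  induction N using Nat.strong_induction_on with
  | _ N IH =>
    intro hN hprimes
    rcases eq_or_ne N 1 with rfl | hN1
    · exact ⟨0, Subsingleton.elim _ _⟩
    have hN0 : N ≠ 0 := hN.ne_zero
    have hN2 : 2 ≤ N := by omega
    set p := N.minFac with hpdef
    have hp : p.Prime := Nat.minFac_prime hN1
    set k := N / p with hkdef
    have hpk : p * k = N := Nat.mul_div_cancel' (Nat.minFac_dvd N)
    have hpk' : ¬ p ∣ k := by
      intro hd
      exact hp.not_isUnit (hN p (by rw [← hpk]; exact mul_dvd_mul_left p hd |>.trans ⟨1, by ring⟩))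
    have hcop : p.Coprime k := (Nat.Prime.coprime_iff_not_dvd hp).mpr hpk'
    have hk0 : k ≠ 0 := by
      intro h; rw [h, mul_zero] at hpk; exact hN0 hpk.symm
    have hklt : k < N := by
      have := hp.two_le
      calc k < p * k := by nlinarith [Nat.pos_of_ne_zero hk0]
      _ = N := hpk
    have hksf : Squarefree k := hN.squarefree_of_dvd ⟨p, by rw [← hpk]; ring⟩
    have hsk : IsSquare ((m : ZMod k)) := by
      refine IH k hklt hksf fun q hq hqk => hprimes q hq (hqk.trans ⟨p, by rw [← hpk]; ring⟩)
    have hsp : IsSquare ((m : ZMod p)) := hprimes p hp (Nat.minFac_dvd N)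
    have hsq : IsSquare ((m : ZMod (p * k))) := by
      let e : ZMod (p * k) ≃+* ZMod p × ZMod k := ZMod.chineseRemainder hcop
      have h1 : IsSquare ((m, m) : ZMod p × ZMod k) := by
        obtain ⟨a, ha⟩ := hsp
        obtain ⟨b, hb⟩ := hsk
        exact ⟨(a, b), Prod.ext ha hb⟩
      have h2 : IsSquare (e.symm ((m : ZMod p), (m : ZMod k))) := h1.map e.symm
      have h3 : e.symm ((m : ZMod p), (m : ZMod k)) = (m : ZMod (p * k)) := by
        apply e.injective
        rw [RingEquiv.apply_symm_apply]
        have h4 : e ((m : ZMod (p * k))) = ((m : ZMod p), (m : ZMod k)) := by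
          exact (map_intCast e m).trans rfl
        rw [h4]
      rwa [h3] at h2
    rw [← hpk]
    exact hsq

theorem int_sq_mul_squarefree (a : ℤ) (ha : a ≠ 0) :
    ∃ s d : ℤ, d ≠ 0 ∧ a = s * d ^ 2 ∧ Squarefree s ∧ s.natAbs ≤ a.natAbs := by
  obtain ⟨s₀, d₀, hsd, hs₀⟩ := Nat.sq_mul_squarefree a.natAbs
  have hd₀ : d₀ ≠ 0 := by
    intro h
    rw [h] at hsd
    simp at hsd
    exact ha (Int.natAbs_eq_zero.mp hsd.symm)
  have habs : (a.natAbs : ℤ) = (s₀ : ℤ) * (d₀ : ℤ) ^ 2 := by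
    rw [← hsd]; push_cast; ring
  rcases Int.natAbs_eq a with h | h
  · refine ⟨(s₀ : ℤ), (d₀ : ℤ), by exact_mod_cast hd₀, by rw [h, habs], ?_, ?_⟩
    · exact Int.squarefree_natCast.mpr hs₀  -- name check
    · rw [Int.natAbs_natCast]
      calc s₀ ≤ s₀ * d₀ ^ 2 := Nat.le_mul_of_pos_right _ (by positivity)
      _ = a.natAbs := by rw [← hsd]; ring
  · refine ⟨-(s₀ : ℤ), (d₀ : ℤ), by exact_mod_cast hd₀, by rw [h, habs]; ring, ?_, ?_⟩
    · rw [← Int.squarefree_natAbs]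
      simpa using hs₀
    · simp only [Int.natAbs_neg, Int.natAbs_natCast]
      calc s₀ ≤ s₀ * d₀ ^ 2 := Nat.le_mul_of_pos_right _ (by positivity)
      _ = a.natAbs := by rw [← hsd]; ring

theorem sqf_ne_sq {m : ℤ} (hm : Squarefree m) (hm1 : m ≠ 1) (t : ℤ) : t ^ 2 ≠ m := by
  intro h
  have : IsUnit t := hm t (by rw [← h]; exact ⟨1, by ring⟩)
  rcases Int.isUnit_iff.mp this with rfl | rfl <;> simp at h <;> exact hm1 h.symm

theorem transfer_fwd {F : Type*} [Field F] [CharZero F] {m n t n' s d : ℤ}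
    (hn0 : n ≠ 0) (hd0 : d ≠ 0) (hnn' : t ^ 2 - m = n * n') (hsd : n' = s * d ^ 2)
    (h : IsN ((m : F)) ((n : F))) : IsN ((m : F)) ((s : F)) := by
  have h1 : IsN ((m : F)) ((n : F) * (n' : F)) := by
    refine ⟨(t : F), 1, ?_⟩
    have hc : ((t : F)) ^ 2 - (m : F) = (n : F) * (n' : F) := by exact_mod_cast hnn'
    linear_combination -hc
  have h2 := IsN.of_mul_left (show (n : F) ≠ 0 from Int.cast_ne_zero.mpr hn0) h h1
  have hc2 : (n' : F) = (s : F) * ((d : F)) ^ 2 := by exact_mod_cast hsd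
  exact IsN.of_mul_sq (show (d : F) ≠ 0 from Int.cast_ne_zero.mpr hd0) (by rwa [hc2] at h2)

theorem transfer_bwd {F : Type*} [Field F] [CharZero F] {m n t n' s d : ℤ}
    (hn'0 : n' ≠ 0) (hnn' : t ^ 2 - m = n * n') (hsd : n' = s * d ^ 2)
    (h : IsN ((m : F)) ((s : F))) : IsN ((m : F)) ((n : F)) := by
  have h1 : IsN ((m : F)) ((n' : F)) := by
    have := h.mul (isN_sq ((m : F)) ((d : F)))
    have hc2 : (n' : F) = (s : F) * ((d : F)) ^ 2 := by exact_mod_cast hsd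
    rwa [← hc2] at this
  have h3 : IsN ((m : F)) ((n' : F) * (n : F)) := by
    refine ⟨(t : F), 1, ?_⟩
    have hc : ((t : F)) ^ 2 - (m : F) = (n : F) * (n' : F) := by exact_mod_cast hnn'
    linear_combination -hc
  exact IsN.of_mul_left (show (n' : F) ≠ 0 from Int.cast_ne_zero.mpr hn'0) h1 h3

theorem key : ∀ N : ℕ, ∀ m n : ℤ, Squarefree m → Squarefree n →
    2 * (m.natAbs + n.natAbs) + (if m.natAbs ≤ n.natAbs then 0 else 1) ≤ N →
    (∀ (p : ℕ) [Fact p.Prime], IsN ((m : ℚ_[p])) ((n : ℚ_[p]))) →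
    IsN ((m : ℝ)) ((n : ℝ)) →
    IsN ((m : ℚ)) ((n : ℚ)) := by
  intro N
  induction N using Nat.strong_induction_on with
  | _ N IH =>
    intro m n hm hn hN hfin hinf
    have hm0 : m ≠ 0 := hm.ne_zero
    have hn0 : n ≠ 0 := hn.ne_zero
    rcases eq_or_ne m 1 with rfl | hm1
    · exact ⟨((n : ℚ) + 1) / 2, ((n : ℚ) - 1) / 2, by push_cast; ring⟩
    rcases le_or_gt m.natAbs n.natAbs with hord | hord
    · -- ordered case |m| ≤ |n|
      rcases eq_or_ne n 1 with rfl | hn1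
      · exact ⟨1, 0, by norm_num⟩
      rcases eq_or_ne n (-1) with rfl | hnm1
      · -- n = -1, so m = -1
        simp only [Int.natAbs_neg, Int.natAbs_one] at hord
        have hmabs : m.natAbs = 1 := le_antisymm hord (by omega)
        rcases Int.natAbs_eq_iff.mp hmabs with rfl | rfl
        · exact absurd rfl hm1
        · exfalso
          obtain ⟨x, y, hxy⟩ := hinf
          push_cast at hxy
          nlinarith [sq_nonneg x, sq_nonneg y]
      have hnabs : 2 ≤ n.natAbs := by
        rcases Nat.lt_or_ge n.natAbs 2 with h | h
        · interval_cases h' : n.natAbs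
          · exact absurd (Int.natAbs_eq_zero.mp h') hn0
          · rcases Int.natAbs_eq_iff.mp h' with rfl | rfl
            · exact absurd rfl hn1
            · exact absurd rfl hnm1
        · exact h
      have hmsq : ∀ t : ℤ, t ^ 2 ≠ m := sqf_ne_sq hm hm1
      have hsq : ∀ p : ℕ, p.Prime → p ∣ n.natAbs → IsSquare ((m : ZMod p)) := by
        intro p pp hpn
        haveI : Fact p.Prime := ⟨pp⟩
        have hpn' : (p : ℤ) ∣ n := Int.dvd_natAbs.mp (Int.natCast_dvd_natCast.mpr hpn)
        by_cases hpm : (p : ℤ) ∣ m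
        · exact ⟨0, by rw [(ZMod.intCast_zmod_eq_zero_iff_dvd m p).mpr hpm]; ring⟩
        · obtain ⟨n₀, hn₀⟩ := hpn'
          have hpn₀ : ¬ (p : ℤ) ∣ n₀ := by
            intro hd
            obtain ⟨e, he⟩ := hd
            have hu : IsUnit ((p : ℤ)) := hn p ⟨e, by rw [hn₀, he]; ring⟩
            have := pp.two_le
            rcases Int.isUnit_iff.mp hu with h | h <;> omega
          exact local_sq p m n₀ hpn₀ (by rw [← hn₀]; exact hfin p)
      have hTsq : IsSquare ((m : ZMod n.natAbs)) :=
        isSquare_zmod_of_forall_prime m n.natAbs (Int.squarefree_natAbs.mpr hn) hsq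
      haveI : NeZero n.natAbs := ⟨by omega⟩
      obtain ⟨r, hr⟩ := hTsq
      set t : ℤ := r.valMinAbs with htdef
      have ht1 : t.natAbs ≤ n.natAbs / 2 := ZMod.natAbs_valMinAbs_le r
      have ht2 : n ∣ t ^ 2 - m := by
        have h0 : ((t ^ 2 - m : ℤ) : ZMod n.natAbs) = 0 := by
          push_cast
          rw [htdef, ZMod.coe_valMinAbs, hr]
          ring
        exact Int.natAbs_dvd.mp ((ZMod.intCast_zmod_eq_zero_iff_dvd _ _).mp h0)
      obtain ⟨n', hn'⟩ := ht2
      have hn'0 : n' ≠ 0 := by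
        intro h
        rw [h, mul_zero] at hn'
        exact hmsq t (by omega)
      have hlt : n'.natAbs < n.natAbs := by
        have h1 : n.natAbs * n'.natAbs = (t ^ 2 - m).natAbs := by rw [hn', Int.natAbs_mul]
        have h2 : (t ^ 2 - m).natAbs ≤ t.natAbs ^ 2 + m.natAbs :=
          le_trans (Int.natAbs_sub_le _ _) (by rw [Int.natAbs_pow])
        have hq : 2 * (n.natAbs / 2) ≤ n.natAbs := by omega
        by_contra hcon
        push_neg at hcon
        have hba : n.natAbs * n.natAbs ≤ n.natAbs * n'.natAbs := Nat.mul_le_mul_left _ hcon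
        have hTq : t.natAbs ^ 2 ≤ (n.natAbs / 2) ^ 2 := Nat.pow_le_pow_left ht1 2
        have h4 : (2 * (n.natAbs / 2)) * (2 * (n.natAbs / 2)) ≤ n.natAbs * n.natAbs :=
          Nat.mul_le_mul hq hq
        have h2a : 2 * n.natAbs ≤ n.natAbs * n.natAbs := Nat.mul_le_mul_right _ hnabs
        nlinarith [h1, h2, hord]
      obtain ⟨s, d, hd0, hsd, hs, hsle⟩ := int_sq_mul_squarefree n' hn'0
      have hfin_s : ∀ (p : ℕ) [Fact p.Prime], IsN ((m : ℚ_[p])) ((s : ℚ_[p])) :=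
        fun p _ => transfer_fwd hn0 hd0 hn' hsd (hfin p)
      have hinf_s : IsN ((m : ℝ)) ((s : ℝ)) := transfer_fwd hn0 hd0 hn' hsd hinf
      have hμ : 2 * (m.natAbs + s.natAbs) + 1 < N := by
        rw [if_pos hord] at hN
        omega
      have hglobal := IH (2 * (m.natAbs + s.natAbs) + 1) hμ m s hm hs
        (by split <;> omega) hfin_s hinf_s
      exact transfer_bwd hn'0 hn' hsd hglobal
    · -- swap case |n| < |m|
      have hmlt : 2 * (n.natAbs + m.natAbs) ≤ N - 1 ∧ 1 ≤ N := by
        rw [if_neg (not_le.mpr hord)] at hN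
        omega
      have h := IH (N - 1) (by omega) n m hn hm
        (by rw [if_pos (le_of_lt hord)]; omega)
        (fun p _ => ((hfin p).swap two_ne_zero (Int.cast_ne_zero.mpr hn0)))
        ((hinf).swap two_ne_zero (Int.cast_ne_zero.mpr hn0))
      exact h.swap two_ne_zero (Int.cast_ne_zero.mpr hm0)

/-- Hilbert's Satz 102 (Hasse norm theorem for quadratic fields): if `m` is a squarefree
nonsquare integer and the nonzero rational `n` is a norm from `ℚ_v(√m)` at every place `v`
of `ℚ` (i.e. all quadratic Hilbert symbols `(n, m)_v` equal `+1`), then `n` is a global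
norm: `n = x² − m·y²` with `x, y ∈ ℚ`. -/
theorem hasse_norm_theorem_quadratic (m : ℤ) (hm : Squarefree m) (hm' : ¬ IsSquare m)
    (n : ℚ) (hn : n ≠ 0)
    (hfin : ∀ (p : ℕ) [Fact p.Prime], ∃ x y : ℚ_[p], (n : ℚ_[p]) = x ^ 2 - (m : ℚ_[p]) * y ^ 2)
    (hinf : ∃ x y : ℝ, (n : ℝ) = x ^ 2 - (m : ℝ) * y ^ 2) :
    ∃ x y : ℚ, n = x ^ 2 - (m : ℚ) * y ^ 2 := by
  have hm0 : m ≠ 0 := hm.ne_zero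
  have hdQ0 : (n.den : ℚ) ≠ 0 := Nat.cast_ne_zero.mpr n.den_nz
  set a : ℤ := n.num * (n.den : ℤ) with ha
  have ha0 : a ≠ 0 := mul_ne_zero (Rat.num_ne_zero.mpr hn) (Int.natCast_ne_zero.mpr n.den_nz)
  obtain ⟨s, d, hd0, hsd, hs, _⟩ := int_sq_mul_squarefree a ha0
  have hdQ : (d : ℚ) ≠ 0 := Int.cast_ne_zero.mpr hd0
  have hQ : (s : ℚ) = n * ((n.den : ℚ) / (d : ℚ)) ^ 2 := by
    have h1 : (a : ℚ) = n * (n.den : ℚ) ^ 2 := by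
      calc (a : ℚ) = (n.num : ℚ) * (n.den : ℚ) := by rw [ha]; push_cast; ring
      _ = ((n.num : ℚ) / (n.den : ℚ)) * (n.den : ℚ) ^ 2 := by field_simp
      _ = n * (n.den : ℚ) ^ 2 := by rw [Rat.num_div_den]
    have h2 : (a : ℚ) = (s : ℚ) * (d : ℚ) ^ 2 := by exact_mod_cast hsd
    rw [h2] at h1
    field_simp
    linear_combination h1
  have hfin_s : ∀ (p : ℕ) [Fact p.Prime], IsN ((m : ℚ_[p])) ((s : ℚ_[p])) := by
    intro p _
    have hcast : ((s : ℤ) : ℚ_[p]) =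
        ((n : ℚ_[p])) * (((n.den : ℚ_[p])) / ((d : ℤ) : ℚ_[p])) ^ 2 := by
      have h := congrArg (fun q : ℚ => (q : ℚ_[p])) hQ
      push_cast at h
      exact h
    obtain ⟨x, y, hxy⟩ := hfin p
    have hN : IsN ((m : ℚ_[p])) ((n : ℚ_[p])) := ⟨x, y, hxy⟩
    have := hN.mul (isN_sq _ (((n.den : ℚ_[p])) / ((d : ℤ) : ℚ_[p])))
    rwa [← hcast] at this
  have hinf_s : IsN ((m : ℝ)) ((s : ℝ)) := by
    have hcast : ((s : ℤ) : ℝ) = ((n : ℝ)) * (((n.den : ℝ)) / ((d : ℤ) : ℝ)) ^ 2 := by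
      have h := congrArg (fun q : ℚ => (q : ℝ)) hQ
      push_cast at h
      exact h
    obtain ⟨x, y, hxy⟩ := hinf
    have hN : IsN ((m : ℝ)) ((n : ℝ)) := ⟨x, y, hxy⟩
    have := hN.mul (isN_sq _ (((n.den : ℝ)) / ((d : ℤ) : ℝ)))
    rwa [← hcast] at this
  have hglobal := key (2 * (m.natAbs + s.natAbs) + 1) m s hm hs
    (by split <;> omega) hfin_s hinf_s
  have hback : n = (s : ℚ) * ((d : ℚ) / (n.den : ℚ)) ^ 2 := by
    rw [hQ]
    field_simp
  have hfinal := hglobal.mul (isN_sq _ ((d : ℚ) / (n.den : ℚ)))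
  rw [← hback] at hfinal
  exact hfinal
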